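/- The set U of excursions from the boundary of S into S is a measurable subset of C([0,∞), cl(S)): i.e., the set of continuous functions u : [0,∞) → cl(S) such that u(0) ∈ ∂S and there exists R > 0 with u(t) ∈ S for 0 < t < R and u(t) ∈ ∂S for all t ≥ R, is a Borel subset of C([0,∞), cl(S)) with the compact-open topology. -/

import Mathlib

open MeasureTheory Set Filter Topology NNReal

/-- The set `U` of excursions from `∂S` into `S`, viewed inside the
space `C([0,∞), cl S)` of continuous paths with values in the closure of `S`
(compact-open topology), is Borel measurable. We model `C([0,∞), cl S)` as the
set of `u : C(ℝ≥0, ℝ)` taking values in `closure S`. -/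
theorem excursion_set_measurable (S : Set ℝ) (hS : IsOpen S) :
    MeasurableSet[borel C(ℝ≥0, ℝ)]
      {u : C(ℝ≥0, ℝ) | (∀ t, u t ∈ closure S) ∧ u 0 ∈ frontier S ∧
        ∃ R : ℝ≥0, 0 < R ∧ (∀ t, 0 < t → t < R → u t ∈ S) ∧
          ∀ t, R ≤ t → u t ∈ frontier S} := by
  letI : MeasurableSpace C(ℝ≥0, ℝ) := borel _
  haveI : BorelSpace C(ℝ≥0, ℝ) := ⟨rfl⟩
  obtain ⟨D, hDc, hDd⟩ := TopologicalSpace.exists_countable_dense ℝ≥0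
  set F := frontier S with hF
  have hFc : IsClosed F := isClosed_frontier
  have hdisj : ∀ x ∈ S, x ∉ F := by
    intro x hx hxf
    rw [hF, hS.frontier_eq] at hxf; exact hxf.2 hx
  have hclos : ∀ x ∈ closure S, x ∉ F → x ∈ S := by
    intro x hx hxf
    by_contra h
    exact hxf (by rw [hF, hS.frontier_eq]; exact ⟨hx, h⟩)
  have key : {u : C(ℝ≥0, ℝ) | (∀ t, u t ∈ closure S) ∧ u 0 ∈ F ∧
        ∃ R : ℝ≥0, 0 < R ∧ (∀ t, 0 < t → t < R → u t ∈ S) ∧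
          ∀ t, R ≤ t → u t ∈ F} =
      ({u : C(ℝ≥0, ℝ) | MapsTo u univ (closure S)} ∩ {u : C(ℝ≥0, ℝ) | u 0 ∈ F}) ∩
      ((⋃ n : ℕ, {u : C(ℝ≥0, ℝ) | MapsTo u (Ici (n : ℝ≥0)) F}) ∩
       ((⋃ n : ℕ, ⋂ q ∈ D,
           {u : C(ℝ≥0, ℝ) | 0 < q → MapsTo u (Icc q (((n : ℝ≥0) + 1)⁻¹)) S}) ∩
        (⋃ q' ∈ D, ⋃ q₁ ∈ D, ⋃ q₂ ∈ D,
           ({u : C(ℝ≥0, ℝ) | u q' ∈ S} ∩ {u : C(ℝ≥0, ℝ) | 0 < q₁} ∩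
            {u : C(ℝ≥0, ℝ) | q₂ < q'} ∩
            {u : C(ℝ≥0, ℝ) | MapsTo u (Icc q₁ q₂) Fᶜ}ᶜ))ᶜ)) := by
    ext u
    simp only [mem_setOf_eq, mem_inter_iff, mem_iUnion, mem_iInter, mem_compl_iff,
      mapsTo_univ_iff, exists_prop, not_exists]
    constructor
    · rintro ⟨hA, hB, R, hR0, hRS, hRF⟩
      refine ⟨⟨hA, hB⟩, ⟨⌈R⌉₊, fun t ht => hRF t ((Nat.le_ceil R).trans ht)⟩, ?_, ?_⟩
      · obtain ⟨n, hn⟩ := exists_nat_one_div_lt (K := ℝ≥0) hR0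
        rw [one_div] at hn
        exact ⟨n, fun q _ hq0 t htI =>
          hRS t (hq0.trans_le htI.1) (lt_of_le_of_lt htI.2 hn)⟩
      · rintro q' ⟨hq'D, q₁, hq₁D, q₂, hq₂D, ⟨⟨hq'S, hq₁0⟩, hq₂'⟩, hnm⟩
        rw [MapsTo] at hnm
        push_neg at hnm
        obtain ⟨t, htI, htF⟩ := hnm
        rw [mem_compl_iff, not_not] at htF
        have ht0 : 0 < t := hq₁0.trans_le htI.1
        have htR : R ≤ t := by
          by_contra h
          exact hdisj _ (hRS t ht0 (not_le.1 h)) htF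
        exact hdisj _ hq'S (hRF q' (htR.trans (htI.2.trans hq₂'.le)))
    · rintro ⟨⟨hA, hB⟩, ⟨n, hn⟩, ⟨m, hm⟩, hP3⟩
      set ε : ℝ≥0 := ((m : ℝ≥0) + 1)⁻¹ with hε_def
      have hε : 0 < ε := by positivity
      have hm' : ∀ t, 0 < t → t ≤ ε → u t ∈ S := by
        intro t ht0 htε
        obtain ⟨q, hqD, hq⟩ := hDd.exists_mem_open isOpen_Ioo (nonempty_Ioo.2 ht0)
        exact hm q hqD hq.1 ⟨hq.2.le, htε⟩
      have hup : ∀ t t', 0 < t → t ≤ t' → u t ∈ F → u t' ∈ S → False := by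
        intro t t' ht0 htt' htF ht'S
        have hne : t < t' := lt_of_le_of_ne htt' (fun h => hdisj _ ht'S (h ▸ htF))
        have hV : IsOpen ({s : ℝ≥0 | u s ∈ S} ∩ Ioi t) :=
          (hS.preimage u.continuous).inter isOpen_Ioi
        obtain ⟨q', hq'D, hq'S, hq't⟩ := hDd.exists_mem_open hV ⟨t', ht'S, hne⟩
        obtain ⟨q₁, hq₁D, hq₁⟩ := hDd.exists_mem_open isOpen_Ioo (nonempty_Ioo.2 ht0)
        obtain ⟨q₂, hq₂D, hq₂⟩ := hDd.exists_mem_open isOpen_Ioo (nonempty_Ioo.2 hq't)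
        exact hP3 q' ⟨hq'D, q₁, hq₁D, q₂, hq₂D,
          ⟨⟨⟨hq'S, hq₁.1⟩, hq₂.2⟩, fun hmt => hmt ⟨hq₁.2.le, hq₂.1.le⟩ htF⟩⟩
      set T : Set ℝ≥0 := Ici ε ∩ u ⁻¹' F with hT_def
      have hTc : IsClosed T := isClosed_Ici.inter (hFc.preimage u.continuous)
      have hTne : T.Nonempty := ⟨max (n : ℝ≥0) ε, mem_Ici.2 (le_max_right _ _), hn (mem_Ici.2 (le_max_left _ _))⟩
      have hRT : sInf T ∈ T := hTc.csInf_mem hTne (OrderBot.bddBelow T)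
      refine ⟨hA, hB, sInf T, hε.trans_le hRT.1, ?_, ?_⟩
      · intro t ht0 htR
        by_cases hF' : u t ∈ F
        · rcases le_or_gt ε t with h | h
          · exact absurd (csInf_le (OrderBot.bddBelow T) ⟨mem_Ici.2 h, hF'⟩) (not_le.2 htR)
          · exact absurd hF' (hdisj _ (hm' t ht0 h.le))
        · exact hclos _ (hA t) hF'
      · intro t hRt
        by_contra hF'
        exact hup (sInf T) t (hε.trans_le hRT.1) hRt hRT.2 (hclos _ (hA t) hF')
  rw [key]
  refine MeasurableSet.inter (MeasurableSet.inter ?_ ?_) (MeasurableSet.inter ?_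
    (MeasurableSet.inter ?_ ?_))
  · exact (ContinuousMap.isClosed_setOf_mapsTo isClosed_closure univ).measurableSet
  · exact (hFc.preimage (continuous_eval_const 0)).measurableSet
  · exact MeasurableSet.iUnion fun n =>
      (ContinuousMap.isClosed_setOf_mapsTo hFc _).measurableSet
  · refine MeasurableSet.iUnion fun n => MeasurableSet.biInter hDc fun q _ => ?_
    by_cases h0 : 0 < q
    · have : {u : C(ℝ≥0, ℝ) | 0 < q → MapsTo u (Icc q (((n : ℝ≥0) + 1)⁻¹)) S} =
          {u : C(ℝ≥0, ℝ) | MapsTo u (Icc q (((n : ℝ≥0) + 1)⁻¹)) S} := by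
        ext v; simp [h0]
      rw [this]
      exact (ContinuousMap.isOpen_setOf_mapsTo isCompact_Icc hS).measurableSet
    · have : {u : C(ℝ≥0, ℝ) | 0 < q → MapsTo u (Icc q (((n : ℝ≥0) + 1)⁻¹)) S} = univ := by
        ext v; simp [h0]
      rw [this]
      exact MeasurableSet.univ
  · refine (MeasurableSet.biUnion hDc fun q' _ => MeasurableSet.biUnion hDc fun q₁ _ =>
      MeasurableSet.biUnion hDc fun q₂ _ => ?_).compl
    refine (((?_ : MeasurableSet _).inter (MeasurableSet.const _)).inter
      (MeasurableSet.const _)).inter ?_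
    · exact (hS.preimage (continuous_eval_const q')).measurableSet
    · exact (ContinuousMap.isOpen_setOf_mapsTo isCompact_Icc hFc.isOpen_compl).measurableSet.compl
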